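/- Let $\mathcal{B}$ be a collection of rectangular parallelepipeds in $\mathbb{R}^3$ containing, for some fixed $j \in \mathbb{Z}$, all parallelepipeds with side lengths $(s, 2^j s, t)$, $s, t > 0$, with sides parallel to the axes. Then $M_{\mathcal{B}}$ does not satisfy $|\{x : M_{\mathcal{B}} f(x) > \alpha\}| \leq C \int \phi(|f|/\alpha)$ for any convex increasing $\phi : [0,\infty) \to [0,\infty)$ with $\lim_{x\to\infty} \phi(x)/(x\log(1+x)) = 0$. -/

import Mathlib

open MeasureTheory Filter
open scoped ENNReal

/-- `R` is an axis-parallel rectangular parallelepiped in `ℝ³` with side lengths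
`(s, 2^j s, t)` for some `s, t > 0` and some `j ∈ S`. -/
def ZygBox (S : Set ℤ) (R : Set (Fin 3 → ℝ)) : Prop :=
  ∃ (a : Fin 3 → ℝ) (s t : ℝ) (j : ℤ), j ∈ S ∧ 0 < s ∧ 0 < t ∧
    R = Set.Icc a (fun i => a i + ![s, (2:ℝ) ^ j * s, t] i)

/-- The geometric maximal operator associated to the family of sets satisfying `P`. -/
noncomputable def maxOp (P : Set (Fin 3 → ℝ) → Prop) (f : (Fin 3 → ℝ) → ℝ)
    (x : Fin 3 → ℝ) : ℝ≥0∞ :=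
  ⨆ (R : Set (Fin 3 → ℝ)) (_ : P R) (_ : x ∈ R),
    (∫⁻ y in R, ENNReal.ofReal |f y|) / volume R

/-- If `𝓑` contains, for some fixed `j ∈ ℤ`, all axis-parallel parallelepipeds with side
lengths `(s, 2^j s, t)`, `s, t > 0`, then `M_𝓑` does not satisfy a weak type estimate
`|{M_𝓑 f > α}| ≤ C ∫ φ(|f|/α)` for any convex increasing `φ : [0,∞) → [0,∞)` with
`φ(x)/(x log(1+x)) → 0` as `x → ∞`. -/
theorem stmt10 (B : Set (Set (Fin 3 → ℝ))) (j : ℤ)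
    (hB : ∀ R : Set (Fin 3 → ℝ), ZygBox {j} R → R ∈ B)
    (φ : ℝ → ℝ)
    (hconv : ConvexOn ℝ (Set.Ici 0) φ)
    (hmono : MonotoneOn φ (Set.Ici 0))
    (hnonneg : ∀ x ∈ Set.Ici (0:ℝ), 0 ≤ φ x)
    (hφ0 : φ 0 = 0)
    (hlim : Tendsto (fun x : ℝ => φ x / (x * Real.log (1 + x))) atTop (nhds 0)) :
    ∀ C : ℝ, 0 < C →
      ¬ (∀ (f : (Fin 3 → ℝ) → ℝ) (α : ℝ), 0 < α →
        volume {x | ENNReal.ofReal α < maxOp (· ∈ B) f x}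
          ≤ ENNReal.ofReal C * ∫⁻ x, ENNReal.ofReal (φ (|f x| / α))) := by
  intro C hC h
  set c : ℝ := (2:ℝ) ^ j with hc_def
  have hc : 0 < c := by positivity
  have hlog2 : (0:ℝ) < Real.log 2 := Real.log_pos (by norm_num)
  set ε : ℝ := 1 / (32 * C * Real.log 2) with hε_def
  have hε : 0 < ε := by positivity
  obtain ⟨M, hM⟩ := (Metric.tendsto_atTop.mp hlim) ε hε
  set n : ℕ := ⌈M⌉₊ with hn_def
  set K : ℝ := 2 ^ (n + 2) with hK_def
  have hK0 : (0:ℝ) < K := by positivity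
  have hK1 : (1:ℝ) ≤ K := one_le_pow₀ one_le_two
  have hKM : M ≤ K := by
    have h1 : M ≤ (n : ℝ) := Nat.le_ceil M
    have h2 : (n : ℝ) ≤ 2 ^ n := by
      exact_mod_cast (Nat.lt_two_pow_self (n := n)).le
    have h3 : (2:ℝ) ^ n ≤ 2 ^ (n + 2) := by
      apply pow_le_pow_right₀ one_le_two; omega
    linarith
  set α : ℝ := 1 / K with hα_def
  have hα : 0 < α := by positivity
  -- the test cube (of side lengths (1, c, 1))
  set Q : Set (Fin 3 → ℝ) := Set.Icc 0 ![1, c, 1] with hQ_def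
  have hQm : MeasurableSet Q := measurableSet_Icc
  set f : (Fin 3 → ℝ) → ℝ := Q.indicator (fun _ => 1) with hf_def
  have hvolQ : volume Q = ENNReal.ofReal c := by
    rw [hQ_def, Real.volume_Icc_pi, Fin.prod_univ_three]
    simp
  have hf_int : ∀ R : Set (Fin 3 → ℝ), Q ⊆ R →
      (∫⁻ y in R, ENNReal.ofReal |f y|) = ENNReal.ofReal c := by
    intro R hQR
    have hfun : (fun y => ENNReal.ofReal |f y|) = Q.indicator 1 := by
      funext y
      by_cases hy : y ∈ Q
      · simp [hf_def, Set.indicator_of_mem hy]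
      · simp [hf_def, Set.indicator_of_notMem hy]
    rw [hfun, lintegral_indicator_one hQm, Measure.restrict_apply hQm,
      Set.inter_eq_self_of_subset_left hQR, hvolQ]
  -- the side lengths
  set r : ℕ → ℝ := fun k => Real.sqrt (2 ^ (n - k)) with hr_def
  have hr_nonneg : ∀ k, 0 ≤ r k := fun k => Real.sqrt_nonneg _
  have hr_one : ∀ k, 1 ≤ r k := by
    intro k
    have h1 : (1:ℝ) ≤ 2 ^ (n - k) := one_le_pow₀ one_le_two
    calc (1:ℝ) = Real.sqrt 1 := Real.sqrt_one.symm
      _ ≤ r k := Real.sqrt_le_sqrt h1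
  have hr_sq : ∀ k, r k * r k = 2 ^ (n - k) := by
    intro k; exact Real.mul_self_sqrt (by positivity)
  -- the disjoint boxes
  set Bk : ℕ → Set (Fin 3 → ℝ) := fun k =>
    Set.pi Set.univ (fun i =>
      ![Set.Icc 0 (r k), Set.Icc 0 (c * r k), Set.Ico ((2:ℝ) ^ k) ((2:ℝ) ^ (k + 1))] i)
    with hBk_def
  have hBk_meas : ∀ k, MeasurableSet (Bk k) := by
    intro k
    apply MeasurableSet.univ_pi
    intro i
    fin_cases i
    · exact measurableSet_Icc
    · exact measurableSet_Icc
    · exact measurableSet_Ico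
  have hBk_vol : ∀ k ≤ n, volume (Bk k) = ENNReal.ofReal (c * 2 ^ n) := by
    intro k hk
    rw [hBk_def]
    rw [volume_pi_pi, Fin.prod_univ_three]
    simp only [Matrix.cons_val_zero, Matrix.cons_val_one, Matrix.head_cons,
      Matrix.cons_val_two, Matrix.tail_cons]
    rw [Real.volume_Icc, Real.volume_Icc, Real.volume_Ico, sub_zero, sub_zero,
      ← ENNReal.ofReal_mul (by positivity), ← ENNReal.ofReal_mul (by positivity)]
    congr 1
    have e1 : (2:ℝ) ^ (k + 1) - 2 ^ k = 2 ^ k := by rw [pow_succ]; ring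
    have e2 : (2:ℝ) ^ (n - k) * 2 ^ k = 2 ^ n := by
      rw [← pow_add]; congr 1; omega
    calc r k * (c * r k) * ((2:ℝ) ^ (k + 1) - 2 ^ k)
        = c * (r k * r k) * 2 ^ k := by rw [e1]; ring
      _ = c * 2 ^ (n - k) * 2 ^ k := by rw [hr_sq]
      _ = c * 2 ^ n := by rw [mul_assoc, e2]
  have hBk_disj_lt : ∀ k l : ℕ, k < l → Disjoint (Bk k) (Bk l) := by
    intro k l hkl
    rw [Set.disjoint_left]
    intro x hxk hxl
    have h2k : x 2 ∈ Set.Ico ((2:ℝ) ^ k) ((2:ℝ) ^ (k + 1)) := by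
      simpa using (Set.mem_univ_pi.mp hxk) 2
    have h2l : x 2 ∈ Set.Ico ((2:ℝ) ^ l) ((2:ℝ) ^ (l + 1)) := by
      simpa using (Set.mem_univ_pi.mp hxl) 2
    have hle : (2:ℝ) ^ (k + 1) ≤ 2 ^ l := by
      apply pow_le_pow_right₀ one_le_two; omega
    have := h2k.2
    have := h2l.1
    linarith
  -- each box is in the superlevel set
  have hsub : ∀ k ≤ n, Bk k ⊆ {x | ENNReal.ofReal α < maxOp (· ∈ B) f x} := by
    intro k hk x hx
    have hx' := Set.mem_univ_pi.mp hx
    have hx0 : x 0 ∈ Set.Icc (0:ℝ) (r k) := by simpa using hx' 0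
    have hx1 : x 1 ∈ Set.Icc (0:ℝ) (c * r k) := by simpa using hx' 1
    have hx2 : x 2 ∈ Set.Ico ((2:ℝ) ^ k) ((2:ℝ) ^ (k + 1)) := by simpa using hx' 2
    set s : ℝ := r k with hs_def
    set t : ℝ := (2:ℝ) ^ (k + 1) with ht_def
    have hs1 : (1:ℝ) ≤ s := hr_one k
    have hs0 : (0:ℝ) < s := lt_of_lt_of_le one_pos hs1
    have ht1 : (1:ℝ) ≤ t := one_le_pow₀ one_le_two
    have ht0 : (0:ℝ) < t := by positivity
    set R : Set (Fin 3 → ℝ) := Set.Icc 0 ![s, c * s, t] with hR_def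
    have hRzyg : ZygBox {j} R := by
      refine ⟨0, s, t, j, rfl, hs0, ht0, ?_⟩
      have heq : (fun i => (0 : Fin 3 → ℝ) i + ![s, (2:ℝ) ^ j * s, t] i) = ![s, c * s, t] := by
        funext i; fin_cases i <;> simp [hc_def]
      rw [hR_def]
      exact congrArg (Set.Icc 0) heq.symm
    have hRB : R ∈ B := hB R hRzyg
    have hxR : x ∈ R := by
      rw [hR_def, Set.mem_Icc]
      constructor
      · rw [Pi.le_def]
        intro i
        fin_cases i
        · simpa using hx0.1
        · simpa using hx1.1
        · simp only [Matrix.cons_val_two, Matrix.tail_cons, Matrix.head_cons, Pi.zero_apply]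
          have h2k : (0:ℝ) ≤ 2 ^ k := by positivity
          exact le_trans h2k hx2.1
      · rw [Pi.le_def]
        intro i
        fin_cases i
        · simpa using hx0.2
        · simpa using hx1.2
        · simpa using hx2.2.le
    have hQR : Q ⊆ R := by
      rw [hQ_def, hR_def]
      apply Set.Icc_subset_Icc le_rfl
      rw [Pi.le_def]
      intro i
      fin_cases i
      · simpa using hs1
      · exact le_mul_of_one_le_right hc.le hs1
      · simpa using ht1
    have hvolR : volume R = ENNReal.ofReal (c * 2 ^ (n + 1)) := by
      rw [hR_def, Real.volume_Icc_pi, Fin.prod_univ_three]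
      simp only [Matrix.cons_val_zero, Matrix.cons_val_one, Matrix.head_cons,
        Matrix.cons_val_two, Matrix.tail_cons, Pi.zero_apply, sub_zero]
      rw [← ENNReal.ofReal_mul hs0.le, ← ENNReal.ofReal_mul (by positivity)]
      congr 1
      have e2 : (2:ℝ) ^ (n - k) * 2 ^ (k + 1) = 2 ^ (n + 1) := by
        rw [← pow_add]; congr 1; omega
      calc s * (c * s) * t = c * (r k * r k) * 2 ^ (k + 1) := by rw [hs_def, ht_def]; ring
        _ = c * 2 ^ (n - k) * 2 ^ (k + 1) := by rw [hr_sq]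
        _ = c * 2 ^ (n + 1) := by rw [mul_assoc, e2]
    have hval : ENNReal.ofReal α < (∫⁻ y in R, ENNReal.ofReal |f y|) / volume R := by
      rw [hf_int R hQR, hvolR]
      rw [ENNReal.lt_div_iff_mul_lt
        (Or.inl (ENNReal.ofReal_pos.mpr (by positivity)).ne') (Or.inl ENNReal.ofReal_ne_top)]
      rw [← ENNReal.ofReal_mul hα.le]
      apply (ENNReal.ofReal_lt_ofReal_iff hc).mpr
      have : α * (c * 2 ^ (n + 1)) = c / 2 := by
        rw [hα_def, hK_def, pow_succ]
        have h2 : (0:ℝ) < 2 ^ (n+1) := by positivity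
        field_simp
      rw [this]; linarith
    have hmax : (∫⁻ y in R, ENNReal.ofReal |f y|) / volume R ≤ maxOp (· ∈ B) f x := by
      exact le_iSup_of_le R (le_iSup_of_le hRB (le_iSup_of_le hxR le_rfl))
    exact lt_of_lt_of_le hval hmax
  -- lower bound on LHS
  have hdisj : (↑(Finset.range (n+1)) : Set ℕ).PairwiseDisjoint Bk := by
    intro k _ l _ hkl
    rcases lt_or_gt_of_ne hkl with hlt | hgt
    · exact hBk_disj_lt k l hlt
    · exact (hBk_disj_lt l k hgt).symm
  have hLHS : (↑(n+1) : ℝ≥0∞) * ENNReal.ofReal (c * 2 ^ n)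
      ≤ volume {x | ENNReal.ofReal α < maxOp (· ∈ B) f x} := by
    have e1 : ∑ k ∈ Finset.range (n+1), volume (Bk k)
        = (↑(n+1) : ℝ≥0∞) * ENNReal.ofReal (c * 2 ^ n) := by
      rw [Finset.sum_congr rfl (fun k hk => hBk_vol k (by
        have := Finset.mem_range.mp hk; omega))]
      rw [Finset.sum_const, Finset.card_range, nsmul_eq_mul]
    calc (↑(n+1) : ℝ≥0∞) * ENNReal.ofReal (c * 2 ^ n)
        = ∑ k ∈ Finset.range (n+1), volume (Bk k) := e1.symm
      _ = volume (⋃ k ∈ Finset.range (n+1), Bk k) :=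
          (measure_biUnion_finset hdisj (fun k _ => hBk_meas k)).symm
      _ ≤ volume {x | ENNReal.ofReal α < maxOp (· ∈ B) f x} := by
          apply measure_mono
          apply Set.iUnion₂_subset
          intro k hk
          exact hsub k (by have := Finset.mem_range.mp hk; omega)
  -- upper bound on RHS
  have hφK_nonneg : 0 ≤ φ K := hnonneg K (le_of_lt hK0)
  have hRHS : (∫⁻ x, ENNReal.ofReal (φ (|f x| / α)))
      = ENNReal.ofReal (φ K) * ENNReal.ofReal c := by
    have hfun : (fun x => ENNReal.ofReal (φ (|f x| / α)))
        = Q.indicator (fun _ => ENNReal.ofReal (φ K)) := by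
      funext x
      by_cases hx : x ∈ Q
      · rw [Set.indicator_of_mem hx]
        have : |f x| / α = K := by
          rw [hf_def, Set.indicator_of_mem hx, hα_def]
          simp [one_div_one_div]
        rw [this]
      · rw [Set.indicator_of_notMem hx]
        have : |f x| / α = 0 := by
          rw [hf_def, Set.indicator_of_notMem hx]; simp
        rw [this, hφ0, ENNReal.ofReal_zero]
    rw [hfun, lintegral_indicator_const hQm, hvolQ]
  -- combine
  have hkey := h f α hα
  rw [hRHS] at hkey
  have hcomb : (↑(n+1) : ℝ≥0∞) * ENNReal.ofReal (c * 2 ^ n)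
      ≤ ENNReal.ofReal (C * (φ K * c)) := by
    rw [ENNReal.ofReal_mul hC.le, ENNReal.ofReal_mul hφK_nonneg]
    exact le_trans hLHS hkey
  have hreal : ((n:ℝ)+1) * (c * 2 ^ n) ≤ C * (φ K * c) := by
    have := hcomb
    rw [show ((↑(n+1) : ℝ≥0∞)) = ENNReal.ofReal ((n:ℝ)+1) by
      rw [← ENNReal.ofReal_natCast (n+1)]; push_cast; ring_nf] at this
    rw [← ENNReal.ofReal_mul (by positivity)] at this
    exact (ENNReal.ofReal_le_ofReal_iff (by positivity)).mp this
  -- contradiction via hlim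
  set L : ℝ := Real.log (1 + K) with hL_def
  have hL0 : 0 < L := Real.log_pos (by linarith)
  have hφK : φ K ≤ ε * (K * L) := by
    have hd := hM K hKM
    rw [Real.dist_eq, sub_zero] at hd
    have hKL : 0 < K * L := mul_pos hK0 hL0
    have hlt : φ K / (K * L) < ε := (abs_lt.mp hd).2
    calc φ K = φ K / (K * L) * (K * L) := (div_mul_cancel₀ _ hKL.ne').symm
      _ ≤ ε * (K * L) := by nlinarith
  have hLle : L ≤ ((n:ℝ) + 3) * Real.log 2 := by
    have h1K : (1:ℝ) + K ≤ 2 ^ (n + 3) := by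
      have : (2:ℝ) ^ (n + 3) = 2 * K := by rw [hK_def, pow_succ]; ring
      linarith
    calc L ≤ Real.log (2 ^ (n + 3)) := Real.log_le_log (by linarith) h1K
      _ = ((n:ℝ) + 3) * Real.log 2 := by rw [Real.log_pow]; push_cast; ring
  have c2 : (0:ℝ) < 2 ^ n := by positivity
  have hK4 : K = 4 * 2 ^ n := by rw [hK_def, pow_add]; ring
  have hchain : C * (φ K * c) ≤ ((n:ℝ) + 3) / 8 * (c * 2 ^ n) := by
    have s1 : C * (φ K * c) ≤ C * (ε * (K * L) * c) := by
      apply mul_le_mul_of_nonneg_left _ hC.le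
      exact mul_le_mul_of_nonneg_right hφK hc.le
    have s2 : C * (ε * (K * L) * c) ≤ C * (ε * (K * (((n:ℝ) + 3) * Real.log 2)) * c) := by
      gcongr
    have s3 : C * (ε * (K * (((n:ℝ) + 3) * Real.log 2)) * c) = ((n:ℝ) + 3) / 8 * (c * 2 ^ n) := by
      rw [hε_def, hK4]
      field_simp
      ring
    linarith
  have hn0 : (0:ℝ) ≤ (n:ℝ) := Nat.cast_nonneg n
  nlinarith [mul_pos hc c2]
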